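/- In the Unary Bin Packing reduction, given a valid packing of items into b bins of capacity B, the constructed set of schedules is k-equitable with k = B·(b³ − b + 1), assuming b ≥ 2. -/
import Mathlib


def Cg {α : Type} [DecidableEq α] [Fintype α] {M : ℕ} (pos : α ≃ Fin M)
    (p : α → ℕ) (c : α) : ℕ :=
  ∑ c' ∈ Finset.univ.filter (fun c' => pos c' ≤ pos c), p c'

def pBin (I b B : ℕ) (s : Fin I → ℕ) : (Fin b × Bool) → (Fin I ⊕ Fin b) → ℕ :=
  fun d c =>
    match d, c with
    | (x, false), Sum.inr x' => if x' = x then B * (b ^ 3 - b ^ 2 - b) else 0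
    | (x, true), Sum.inr x' => if x' = x then B * b ^ 2 else 0
    | (_, true), Sum.inl j => s j
    | (_, false), Sum.inl _ => 0

lemma Cg_le_of {α : Type} [DecidableEq α] [Fintype α] {M : ℕ} (pos : α ≃ Fin M)
    (p : α → ℕ) (c : α) (S : Finset α)
    (h : ∀ c', pos c' ≤ pos c → p c' ≠ 0 → c' ∈ S) :
    Cg pos p c ≤ ∑ c' ∈ S, p c' := by
  unfold Cg
  rw [← Finset.sum_filter_ne_zero (Finset.univ.filter (fun c' => pos c' ≤ pos c))]
  apply Finset.sum_le_sum_of_subset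
  intro c' hc'
  simp only [Finset.mem_filter, Finset.mem_univ, true_and] at hc'
  exact h c' hc'.1 hc'.2

theorem stmt14 (I b B : ℕ) (hb : 2 ≤ b) (s : Fin I → ℕ)
    (assign : Fin I → Fin b)
    (hcap : ∀ x, ∑ j ∈ Finset.univ.filter (fun j => assign j = x), s j ≤ B)
    (σ : (Fin b × Bool) → ((Fin I ⊕ Fin b) ≃ Fin (I + b)))
    (horder : ∀ (x : Fin b) (j : Fin I),
      ((σ (x, true)) (Sum.inl j) < (σ (x, true)) (Sum.inr x) ↔ assign j = x))
    (hzero : ∀ i c c', pBin I b B s i c = 0 → 0 < pBin I b B s i c' →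
      (σ i) c < (σ i) c') :
    ∀ c, ∑ i, Cg (σ i) (pBin I b B s i) c ≤ B * (b ^ 3 - b + 1) := by
  -- arithmetic facts
  have hbb : b ^ 2 + b ≤ b ^ 3 := by nlinarith
  have hkey : (b - 1) * (b ^ 2 + b) + b = b ^ 3 := by
    obtain ⟨n, rfl⟩ : ∃ n, b = n + 1 := ⟨b - 1, by omega⟩
    simp only [Nat.add_sub_cancel]
    ring
  -- Cg is zero on days where the client's own job is zero
  have hCg0 : ∀ i c, pBin I b B s i c = 0 → Cg (σ i) (pBin I b B s i) c = 0 := by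
    intro i c h0
    have := Cg_le_of (σ i) (pBin I b B s i) c ∅ (by
      intro c' hle hne
      exact absurd hle (hzero i c c' h0 (Nat.pos_of_ne_zero hne)).not_ge)
    simpa using this
  -- total item size
  have htot : ∑ j, s j ≤ b * B := by
    calc ∑ j, s j = ∑ x : Fin b, ∑ j ∈ Finset.univ.filter (fun j => assign j = x), s j := by
          rw [← Finset.sum_fiberwise (Finset.univ) assign s]
      _ ≤ ∑ _x : Fin b, B := Finset.sum_le_sum (fun x _ => hcap x)
      _ = b * B := by simp [Finset.sum_const, mul_comm]
  intro c
  rw [Fintype.sum_prod_type]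
  cases c with
  | inr x =>
    have dayf : ∀ x' : Fin b, Cg (σ (x', false)) (pBin I b B s (x', false)) (Sum.inr x)
        ≤ if x' = x then B * (b ^ 3 - b ^ 2 - b) else 0 := by
      intro x'
      by_cases hx : x' = x
      · subst hx
        have hle := Cg_le_of (σ (x', false)) (pBin I b B s (x', false)) (Sum.inr x')
          {Sum.inr x'} (by
            intro c' _ hne
            match c' with
            | Sum.inl j => simp [pBin] at hne
            | Sum.inr x'' =>
              simp only [pBin] at hne
              simp only [Finset.mem_singleton, Sum.inr.injEq]
              by_contra h
              simp [h] at hne)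
        simpa [pBin] using hle
      · rw [if_neg hx]
        have : pBin I b B s (x', false) (Sum.inr x) = 0 := by
          simp [pBin, Ne.symm hx]
        simp [hCg0 _ _ this]
    have dayt : ∀ x' : Fin b, Cg (σ (x', true)) (pBin I b B s (x', true)) (Sum.inr x)
        ≤ if x' = x then B * b ^ 2 + B else 0 := by
      intro x'
      by_cases hx : x' = x
      · subst hx
        set S : Finset (Fin I ⊕ Fin b) :=
          insert (Sum.inr x') ((Finset.univ.filter (fun j => assign j = x')).image Sum.inl)
          with hS
        have hle := Cg_le_of (σ (x', true)) (pBin I b B s (x', true)) (Sum.inr x') S (by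
          intro c' hle hne
          match c' with
          | Sum.inr x'' =>
            simp only [pBin] at hne
            by_cases h : x'' = x'
            · subst h; simp [hS]
            · simp [h] at hne
          | Sum.inl j =>
            have hne' : (Sum.inl j : Fin I ⊕ Fin b) ≠ Sum.inr x' := by simp
            have hlt : (σ (x', true)) (Sum.inl j) < (σ (x', true)) (Sum.inr x') :=
              lt_of_le_of_ne hle (fun h => hne' ((σ (x', true)).injective h))
            have ha : assign j = x' := (horder x' j).mp hlt
            simp only [hS, Finset.mem_insert, Finset.mem_image, Finset.mem_filter,
              Finset.mem_univ, true_and]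
            exact Or.inr ⟨j, ha, rfl⟩)
        have hsum : ∑ c' ∈ S, pBin I b B s (x', true) c' ≤ B * b ^ 2 + B := by
          rw [hS, Finset.sum_insert (by simp)]
          have h1 : pBin I b B s (x', true) (Sum.inr x') = B * b ^ 2 := by simp [pBin]
          have h2 : ∑ c' ∈ (Finset.univ.filter (fun j => assign j = x')).image Sum.inl,
              pBin I b B s (x', true) c' ≤ B := by
            rw [Finset.sum_image (by intros; simp_all)]
            simpa [pBin] using hcap x'
          omega
        simp only [if_pos rfl]
        exact le_trans hle hsum
      · rw [if_neg hx]
        have : pBin I b B s (x', true) (Sum.inr x) = 0 := by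
          simp [pBin, Ne.symm hx]
        simp [hCg0 _ _ this]
    calc ∑ x' : Fin b, ∑ t : Bool, Cg (σ (x', t)) (pBin I b B s (x', t)) (Sum.inr x)
        ≤ ∑ x' : Fin b, ((if x' = x then B * (b ^ 3 - b ^ 2 - b) else 0)
            + (if x' = x then B * b ^ 2 + B else 0)) := by
          apply Finset.sum_le_sum
          intro x' _
          rw [Fintype.sum_bool]
          have := dayf x'
          have := dayt x'
          omega
      _ = B * (b ^ 3 - b ^ 2 - b) + (B * b ^ 2 + B) := by
          rw [Finset.sum_add_distrib, Finset.sum_ite_eq' Finset.univ x,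
            Finset.sum_ite_eq' Finset.univ x]
          simp
      _ ≤ B * (b ^ 3 - b + 1) := by
          have h3 : b ^ 3 - b + 1 = (b ^ 3 - b ^ 2 - b) + b ^ 2 + 1 := by omega
          rw [h3]; ring_nf; omega
  | inl j =>
    have dayf : ∀ x' : Fin b, Cg (σ (x', false)) (pBin I b B s (x', false)) (Sum.inl j) = 0 := by
      intro x'
      exact hCg0 _ _ (by simp [pBin])
    have dayt : ∀ x' : Fin b, Cg (σ (x', true)) (pBin I b B s (x', true)) (Sum.inl j)
        ≤ if x' = assign j then B else B * b ^ 2 + B * b := by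
      intro x'
      by_cases hx : x' = assign j
      · have hjx : (σ (x', true)) (Sum.inl j) < (σ (x', true)) (Sum.inr x') :=
          (horder x' j).mpr hx.symm
        have hle := Cg_le_of (σ (x', true)) (pBin I b B s (x', true)) (Sum.inl j)
          ((Finset.univ.filter (fun j' => assign j' = x')).image Sum.inl) (by
            intro c' hle hne
            match c' with
            | Sum.inr x'' =>
              simp only [pBin] at hne
              by_cases h : x'' = x'
              · subst h; exact absurd (lt_of_le_of_lt hle hjx) (lt_irrefl _)
              · simp [h] at hne
            | Sum.inl j' =>
              have hlt : (σ (x', true)) (Sum.inl j') < (σ (x', true)) (Sum.inr x') :=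
                lt_of_le_of_lt hle hjx
              have ha : assign j' = x' := (horder x' j').mp hlt
              simp only [Finset.mem_image, Finset.mem_filter, Finset.mem_univ, true_and]
              exact ⟨j', ha, rfl⟩)
        have hsum : ∑ c' ∈ (Finset.univ.filter (fun j' => assign j' = x')).image Sum.inl,
            pBin I b B s (x', true) c' ≤ B := by
          rw [Finset.sum_image (by intros; simp_all)]
          simpa [pBin] using hcap x'
        rw [if_pos hx]
        exact le_trans hle hsum
      · rw [if_neg hx]
        have hle := Cg_le_of (σ (x', true)) (pBin I b B s (x', true)) (Sum.inl j)
          Finset.univ (by intros; simp)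
        refine le_trans hle ?_
        rw [Fintype.sum_sum_type]
        have h1 : ∑ j' : Fin I, pBin I b B s (x', true) (Sum.inl j') = ∑ j' : Fin I, s j' := by
          simp [pBin]
        have h2 : ∑ x'' : Fin b, pBin I b B s (x', true) (Sum.inr x'') = B * b ^ 2 := by
          simp only [pBin]
          rw [Finset.sum_ite_eq' Finset.univ x']
          simp
        rw [h1, h2]
        have : (b : ℕ) * B = B * b := by ring
        omega
    calc ∑ x' : Fin b, ∑ t : Bool, Cg (σ (x', t)) (pBin I b B s (x', t)) (Sum.inl j)
        ≤ ∑ x' : Fin b, (if x' = assign j then B else B * b ^ 2 + B * b) := by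
          apply Finset.sum_le_sum
          intro x' _
          rw [Fintype.sum_bool]
          have h1 := dayf x'
          have h2 := dayt x'
          omega
      _ = B + (b - 1) * (B * b ^ 2 + B * b) := by
          rw [← Finset.add_sum_erase Finset.univ _ (Finset.mem_univ (assign j))]
          rw [if_pos rfl]
          congr 1
          rw [Finset.sum_congr rfl (fun x' hx' => by
            rw [if_neg (Finset.ne_of_mem_erase hx')])]
          rw [Finset.sum_const, Finset.card_erase_of_mem (Finset.mem_univ (assign j))]
          simp [Finset.card_univ, smul_eq_mul]
      _ ≤ B * (b ^ 3 - b + 1) := by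
          have h4 : (b - 1) * (B * b ^ 2 + B * b) = B * ((b - 1) * (b ^ 2 + b)) := by ring
          have h5 : b ^ 3 - b + 1 = (b - 1) * (b ^ 2 + b) + 1 := by omega
          rw [h4, h5]
          ring_nf
          omega
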